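/- arXiv:2507.16985 — 5 statements merged into one kernel-verified Lean document; each statement's English description precedes it below -/
import Mathlib

section
/- For structures 𝔄 and 𝔅 with disjoint relational signatures, the automorphism group of the wreath product structure 𝔄 ≀ 𝔅 equals the wreath product Aut(𝔄) ≀ Aut(𝔅) of permutation groups. -/
/-- for structures `𝔄` (relations `RA`) and `𝔅` (relations `RB`) with
disjoint relational signatures, a permutation `e` of `A × B` is an automorphism of the
wreath product structure `𝔄 ≀ 𝔅` (i.e. preserves the fiber equivalence `E`, the
relations of `𝔄` lifted to tuples within a single fiber, and the relations of `𝔅` on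
second coordinates) if and only if it lies in the wreath product
`Aut(𝔄) ≀ Aut(𝔅)`, i.e. `e (a,b) = (α b a, β b)` for some `β ∈ Aut(𝔅)` and
automorphisms `α b ∈ Aut(𝔄)`. -/
theorem stmt_7 {A B : Type*} {ιA ιB : Type*}
    (arA : ιA → ℕ) (RA : ∀ r, (Fin (arA r) → A) → Prop)
    (arB : ιB → ℕ) (RB : ∀ s, (Fin (arB s) → B) → Prop)
    (e : Equiv.Perm (A × B)) :
    ((∀ x y : A × B, x.2 = y.2 ↔ (e x).2 = (e y).2) ∧
      (∀ r (f : Fin (arA r) → A × B),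
        ((∀ j j', (e (f j)).2 = (e (f j')).2) ∧ RA r (fun j => (e (f j)).1)) ↔
        ((∀ j j', (f j).2 = (f j').2) ∧ RA r (fun j => (f j).1))) ∧
      (∀ s (f : Fin (arB s) → A × B),
        RB s (fun j => (e (f j)).2) ↔ RB s (fun j => (f j).2)))
    ↔ ∃ β : Equiv.Perm B,
        (∀ s (t : Fin (arB s) → B), RB s (fun j => β (t j)) ↔ RB s t) ∧
        ∃ α : B → Equiv.Perm A,
          (∀ b r (t : Fin (arA r) → A), RA r (fun j => α b (t j)) ↔ RA r t) ∧
          ∀ x : A × B, e x = (α x.2 x.1, β x.2) := by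
  constructor
  · rintro ⟨hE, hA, hB⟩
    rcases isEmpty_or_nonempty A with h | h
    · refine ⟨1, by simp, fun _ => 1, by simp, fun x => isEmptyElim x.1⟩
    · obtain ⟨a₀⟩ := h
      have hfib : ∀ a a' b, (e (a, b)).2 = (e (a', b)).2 := fun a a' b =>
        (hE (a, b) (a', b)).1 rfl
      have hβinj : Function.Injective (fun b => (e (a₀, b)).2) := by
        intro b b' hbb
        exact (hE (a₀, b) (a₀, b')).2 hbb
      have hβsurj : Function.Surjective (fun b => (e (a₀, b)).2) := by
        intro b'
        refine ⟨(e.symm (a₀, b')).2, ?_⟩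
        have h1 := hfib a₀ (e.symm (a₀, b')).1 (e.symm (a₀, b')).2
        simp only at h1 ⊢
        rw [h1, Prod.mk.eta, Equiv.apply_symm_apply]
      set β : Equiv.Perm B := Equiv.ofBijective _ ⟨hβinj, hβsurj⟩ with hβdef
      have hβ : ∀ b, β b = (e (a₀, b)).2 := fun b => rfl
      have hαbij : ∀ b : B, Function.Bijective (fun a => (e (a, b)).1) := by
        intro b
        constructor
        · intro a a' haa
          have h2 : e (a, b) = e (a', b) := Prod.ext haa (hfib a a' b)
          have h3 := e.injective h2
          exact congrArg Prod.fst h3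
        · intro a'
          have hp2 : (e.symm (a', β b)).2 = b := by
            apply (hE (e.symm (a', β b)) (a₀, b)).2
            rw [Equiv.apply_symm_apply]
            exact (hβ b).symm
          set p := e.symm (a', β b) with hp
          refine ⟨p.1, ?_⟩
          have hpe : (p.1, b) = p := by rw [← hp2]
          show (e (p.1, b)).1 = a'
          rw [hpe, hp, Equiv.apply_symm_apply]
      refine ⟨β, ?_, fun b => Equiv.ofBijective _ (hαbij b), ?_, ?_⟩
      · intro s t
        have := hB s (fun j => (a₀, t j))
        exact this
      · intro b r t
        have key := hA r (fun j => (t j, b))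
        show (RA r fun j => (e (t j, b)).1) ↔ RA r t
        constructor
        · intro hr
          exact (key.1 ⟨fun j j' => hfib _ _ _, hr⟩).2
        · intro hr
          exact (key.2 ⟨fun j j' => rfl, hr⟩).2
      · intro x
        have h3 : (e x).2 = β x.2 := by
          rw [hβ, ← hfib x.1 a₀ x.2, Prod.mk.eta]
        have h4 : (e x).1 = (fun a => (e (a, x.2)).1) x.1 := by
          simp only [Prod.mk.eta]
        exact Prod.ext h4 h3
  · rintro ⟨β, hβ, α, hα, he⟩
    refine ⟨?_, ?_, ?_⟩
    · intro x y
      rw [he x, he y]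
      simp [β.injective.eq_iff]
    · intro r f
      simp only [he]
      have h1 : (∀ j j', β (f j).2 = β (f j').2) ↔ ∀ j j', (f j).2 = (f j').2 := by
        simp [β.injective.eq_iff]
      rw [h1]
      apply and_congr_right
      intro hfb
      rcases isEmpty_or_nonempty (Fin (arA r)) with hfin | hne
      · have h2 : (fun j => (α (f j).2) (f j).1) = fun j => (f j).1 :=
          funext fun j => isEmptyElim j
        rw [h2]
      · obtain ⟨j₀⟩ := hne
        have h3 : (fun j => (α (f j).2) (f j).1) = fun j => α (f j₀).2 ((f j).1) := by
          funext j; rw [hfb j j₀]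
        rw [h3]
        exact hα (f j₀).2 r _
    · intro s f
      simp only [he]
      exact hβ s fun j => (f j).2
end

section
/- Let (G, G*, π) be a finite cover of permutation groups. If G is closed, then G* is closed. -/
/-- The topology of pointwise convergence on `Sym(X)`. -/
def pointwiseTop (X : Type*) : TopologicalSpace (Equiv.Perm X) :=
  letI : TopologicalSpace X := ⊥
  TopologicalSpace.induced (fun e => (e : X → X)) inferInstance

section aux

/-- In a product of discrete spaces, membership in the closure gives finite agreement. -/
lemma aux_agree_of_mem_closure {ι Z : Type*} [TopologicalSpace Z] [DiscreteTopology Z]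
    {S : Set (ι → Z)} {f : ι → Z} (hf : f ∈ closure S) (A : Finset ι) :
    ∃ g ∈ S, ∀ i ∈ A, g i = f i := by
  have hopen : IsOpen {g : ι → Z | ∀ i ∈ A, g i = f i} := by
    have : {g : ι → Z | ∀ i ∈ A, g i = f i} = ⋂ i ∈ A, (fun g : ι → Z => g i) ⁻¹' {f i} := by
      ext g; simp
    rw [this]
    exact isOpen_biInter_finset fun i _ =>
      (continuous_apply i).isOpen_preimage _ (isOpen_discrete _)
  obtain ⟨g, hg1, hg2⟩ := (mem_closure_iff.mp hf) _ hopen (fun i _ => rfl)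
  exact ⟨g, hg2, hg1⟩

/-- Conversely, finite agreement gives membership in the closure. -/
lemma aux_mem_closure_of_agree {ι Z : Type*} [TopologicalSpace Z]
    {S : Set (ι → Z)} {f : ι → Z}
    (H : ∀ A : Finset ι, ∃ g ∈ S, ∀ i ∈ A, g i = f i) : f ∈ closure S := by
  rw [mem_closure_iff]
  intro U hU hfU
  obtain ⟨I, u, hu, hsub⟩ := isOpen_pi_iff.mp hU f hfU
  obtain ⟨g, hgS, hg⟩ := H I
  exact ⟨g, hsub fun i hi => (hg i hi) ▸ (hu i hi).2, hgS⟩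

end aux

/-- let `(G, G*, π)` be a finite cover of permutation groups: `π` is a
surjection with finite fibers, the relation `π a = π b` is preserved by `G`, and the
induced homomorphism `μ_π` maps `G` onto `G*`. If `G` is closed then `G*` is closed. -/
theorem stmt_11 {X Xs : Type*} (G : Subgroup (Equiv.Perm X)) (Gs : Subgroup (Equiv.Perm Xs))
    (π : X → Xs) (hsurj : Function.Surjective π)
    (hcong : ∀ g ∈ G, ∀ a b : X, π a = π b → π (g a) = π (g b))
    (himg : ∀ h : Equiv.Perm Xs, h ∈ Gs ↔ ∃ g ∈ G, ∀ a : X, h (π a) = π (g a))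
    (hfib : ∀ w : Xs, (π ⁻¹' {w}).Finite)
    (hGclosed : @IsClosed _ (pointwiseTop X) (G : Set (Equiv.Perm X))) :
    @IsClosed _ (pointwiseTop Xs) (Gs : Set (Equiv.Perm Xs)) := by
  classical
  letI tX : TopologicalSpace X := ⊥
  letI tXs : TopologicalSpace Xs := ⊥
  haveI : DiscreteTopology X := ⟨rfl⟩
  haveI : DiscreteTopology Xs := ⟨rfl⟩
  -- unpack closedness of G
  obtain ⟨tG, htGc, htGeq⟩ :=
    (isClosed_induced_iff (t := (inferInstance : TopologicalSpace (X → X)))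
      (f := fun e : Equiv.Perm X => (e : X → X))).mp hGclosed
  -- reduce to: any perm whose coercion is in the closure of coe '' Gs lies in Gs
  rw [show pointwiseTop Xs
      = TopologicalSpace.induced (fun e : Equiv.Perm Xs => (e : Xs → Xs)) inferInstance from rfl,
    isClosed_induced_iff]
  refine ⟨closure ((fun e : Equiv.Perm Xs => (e : Xs → Xs)) '' (Gs : Set (Equiv.Perm Xs))),
    isClosed_closure, ?_⟩
  ext h
  simp only [Set.mem_preimage, SetLike.mem_coe]
  constructor
  swap
  · intro hmem
    exact subset_closure ⟨h, hmem, rfl⟩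
  intro hcl
  -- Step 1: for each finite A ⊆ X there is g ∈ G with π (g a) = h (π a) on A.
  have key1 : ∀ A : Finset X, ∃ g ∈ G, ∀ a ∈ A, π (g a) = h (π a) := by
    intro A
    obtain ⟨h'f, ⟨h', hh'Gs, rfl⟩, hagree⟩ := aux_agree_of_mem_closure hcl (A.image π)
    obtain ⟨g, hgG, hg⟩ := (himg h').mp hh'Gs
    refine ⟨g, hgG, fun a ha => ?_⟩
    exact (hg a).symm.trans (hagree (π a) (Finset.mem_image_of_mem π ha))
  -- the "target fibers"
  set K : X → Set X := fun a => π ⁻¹' {h (π a)} with hK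
  have hKne : ∀ a, (K a).Nonempty := fun a => hsurj (h (π a))
  have hKfin : ∀ a, (K a).Finite := fun a => hfib _
  -- compact ambient set
  set s : Set (X → X) := Set.pi Set.univ K with hs
  have hscomp : IsCompact s := isCompact_univ_pi fun a => (hKfin a).isCompact
  -- the directed family of closed sets
  set B : Finset X → Set (X → X) := fun A =>
    {f : X → X | ∃ g ∈ G, ∀ a ∈ A, (g : X → X) a = f a} with hB
  set t : Finset X → Set (X → X) := fun A => s ∩ closure (B A) with ht
  have htsub : ∀ {A A' : Finset X}, A ⊆ A' → t A' ⊆ t A := by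
    intro A A' hAA'
    refine Set.inter_subset_inter_right _ (closure_mono ?_)
    rintro f ⟨g, hgG, hg⟩
    exact ⟨g, hgG, fun a ha => hg a (hAA' ha)⟩
  have htd : Directed (· ⊇ ·) t := fun A A' =>
    ⟨A ∪ A', htsub Finset.subset_union_left, htsub Finset.subset_union_right⟩
  have htn : ∀ A, (t A).Nonempty := by
    intro A
    obtain ⟨g, hgG, hg⟩ := key1 A
    refine ⟨fun a => if a ∈ A then g a else (hKne a).some, ?_, ?_⟩
    · intro a _
      by_cases haA : a ∈ A
      · simp only [haA, if_pos]
        exact hg a haA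
      · simp only [haA, if_neg, not_false_iff]
        exact (hKne a).some_mem
    · refine subset_closure ⟨g, hgG, fun a ha => ?_⟩
      simp [ha]
  have htc : ∀ A, IsCompact (t A) := fun A => hscomp.inter_right isClosed_closure
  have htcl : ∀ A, IsClosed (t A) := by
    intro A
    exact IsClosed.inter (isClosed_set_pi fun a _ => isClosed_discrete _) isClosed_closure
  obtain ⟨f, hf⟩ := IsCompact.nonempty_iInter_of_directed_nonempty_isCompact_isClosed
    t htd htn htc htcl
  simp only [Set.mem_iInter] at hf
  have hfs : ∀ a : X, π (f a) = h (π a) := fun a => (hf ∅).1 a (Set.mem_univ a)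
  -- Step 2: f agrees with some element of G on each finite set
  have Hagree : ∀ A : Finset X, ∃ g ∈ G, ∀ a ∈ A, (g : X → X) a = f a := by
    intro A
    obtain ⟨f', ⟨g, hgG, hg⟩, hf'⟩ := aux_agree_of_mem_closure (hf A).2 A
    exact ⟨g, hgG, fun a ha => (hg a ha).trans (hf' a ha)⟩
  -- Step 3: f is bijective
  have hinj : Function.Injective f := by
    intro a b hab
    obtain ⟨g, _, hg⟩ := Hagree {a, b}
    have ha := hg a (by simp)
    have hb := hg b (by simp)
    have : (g : X → X) a = (g : X → X) b := by rw [ha, hb, hab]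
    exact g.injective this
  have hsurjf : Function.Surjective f := by
    intro x
    obtain ⟨a0, ha0⟩ := hsurj (h.symm (π x))
    have hfin : (π ⁻¹' {h.symm (π x)}).Finite := hfib _
    obtain ⟨g, hgG, hg⟩ := Hagree hfin.toFinset
    have ha0A : a0 ∈ hfin.toFinset := by
      simp [Set.mem_preimage, ha0]
    -- π (g a0) = π x
    have h1 : π ((g : X → X) a0) = π x := by
      rw [hg a0 ha0A, hfs a0, ha0, Equiv.apply_symm_apply]
    -- g⁻¹ x is in the fiber over h.symm (π x)
    have h2 : π ((g⁻¹ : Equiv.Perm X) x) = h.symm (π x) := by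
      have := hcong g⁻¹ (inv_mem hgG) ((g : X → X) a0) x h1
      simpa [ha0] using this.symm
    have hmem : (g⁻¹ : Equiv.Perm X) x ∈ hfin.toFinset := by
      rw [Set.Finite.mem_toFinset]
      exact h2
    refine ⟨(g⁻¹ : Equiv.Perm X) x, ?_⟩
    rw [← hg _ hmem]
    exact g.apply_symm_apply x
  -- the lifted permutation
  let e : Equiv.Perm X := Equiv.ofBijective f ⟨hinj, hsurjf⟩
  have hce : (e : X → X) = f := rfl
  -- e ∈ G since G is closed
  have heG : e ∈ G := by
    have hfc : f ∈ closure ((fun e : Equiv.Perm X => (e : X → X)) '' (G : Set (Equiv.Perm X))) := by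
      apply aux_mem_closure_of_agree
      intro A
      obtain ⟨g, hgG, hg⟩ := Hagree A
      exact ⟨(g : X → X), ⟨g, hgG, rfl⟩, hg⟩
    have hsubt : ((fun e : Equiv.Perm X => (e : X → X)) '' (G : Set (Equiv.Perm X))) ⊆ tG := by
      rintro _ ⟨g, hgG, rfl⟩
      rw [← htGeq] at hgG
      exact hgG
    have h4 : e ∈ (fun e : Equiv.Perm X => (e : X → X)) ⁻¹' tG :=
      (closure_minimal hsubt htGc) hfc
    rw [htGeq] at h4
    exact h4
  exact (himg h).mpr ⟨e, heG, fun a => (hfs a).symm⟩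
end

section
/- Let G be a closed permutation group and (A,B) a partition of its domain into G-invariant subsets. Suppose that for every finite subset T ⊆ B the closure of (G_T)|_A equals the closure of G|_A. Then (G_B)|_A = G|_A and G|_A is closed, where G_B is the pointwise stabilizer of B. -/
/-- The restriction of a set `S` of permutations of `X` to an (invariant) subset `A`:
the permutations of `A` which agree with some member of `S` on `A`. -/
def restrictSet {X : Type*} (A : Set X) (S : Set (Equiv.Perm X)) : Set (Equiv.Perm A) :=
  {e | ∃ g ∈ S, ∀ a : A, (e a : X) = g (a : X)}

theorem mem_closure_pt_iff {Y : Type*} (S : Set (Equiv.Perm Y)) (e : Equiv.Perm Y) :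
    e ∈ @closure _ (pointwiseTop Y) S ↔ ∀ F : Finset Y, ∃ g ∈ S, ∀ y ∈ F, e y = g y := by
  classical
  letI : TopologicalSpace Y := ⊥
  haveI : DiscreteTopology Y := ⟨rfl⟩
  letI : TopologicalSpace (Equiv.Perm Y) :=
    TopologicalSpace.induced (fun e : Equiv.Perm Y => (e : Y → Y)) inferInstance
  have hpt : pointwiseTop Y =
      TopologicalSpace.induced (fun e : Equiv.Perm Y => (e : Y → Y)) inferInstance := rfl
  rw [show (@closure _ (pointwiseTop Y) S) = closure S from by rw [hpt]]
  rw [mem_closure_iff]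
  constructor
  · intro h F
    have hopen : IsOpen {f : Equiv.Perm Y | ∀ y ∈ F, f y = e y} := by
      have heq : {f : Equiv.Perm Y | ∀ y ∈ F, f y = e y}
          = (fun f : Equiv.Perm Y => (f : Y → Y)) ⁻¹'
            (⋂ y ∈ F, (fun f : Y → Y => f y) ⁻¹' {e y}) := by
        ext f; simp
      rw [heq]
      exact (F.finite_toSet.isOpen_biInter fun y _ =>
        (continuous_apply y).isOpen_preimage _ (isOpen_discrete _)).preimage continuous_induced_dom
    obtain ⟨g, hg1, hg2⟩ := h _ hopen (fun y _ => rfl)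
    exact ⟨g, hg2, fun y hy => (hg1 y hy).symm⟩
  · intro h o ho heo
    obtain ⟨V, hV, rfl⟩ := isOpen_induced_iff.mp ho
    obtain ⟨I, u, hu, hsub⟩ := isOpen_pi_iff.mp hV _ heo
    obtain ⟨g, hgS, hg⟩ := h I
    refine ⟨g, hsub fun i hi => ?_, hgS⟩
    simpa [← hg i hi] using (hu i hi).2


/-- let `G` be a closed permutation group and `(A, B)` a partition of its
domain into `G`-invariant subsets. If for every finite `T ⊆ B` the closure of
`(G_T)|_A` equals the closure of `G|_A`, then `(G_B)|_A = G|_A` and `G|_A` is closed. -/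
theorem stmt_12 {X : Type*} (G : Subgroup (Equiv.Perm X))
    (hGclosed : @IsClosed _ (pointwiseTop X) (G : Set (Equiv.Perm X)))
    (A B : Set X) (hunion : A ∪ B = Set.univ) (hdisj : A ∩ B = ∅)
    (hAinv : ∀ g ∈ G, ∀ x ∈ A, g x ∈ A) (hBinv : ∀ g ∈ G, ∀ x ∈ B, g x ∈ B)
    (hyp : ∀ T : Finset X, ↑T ⊆ B →
      @closure _ (pointwiseTop A)
          (restrictSet A {g : Equiv.Perm X | g ∈ G ∧ ∀ t ∈ T, g t = t}) =
        @closure _ (pointwiseTop A) (restrictSet A (G : Set (Equiv.Perm X)))) :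
    restrictSet A {g : Equiv.Perm X | g ∈ G ∧ ∀ b ∈ B, g b = b} =
        restrictSet A (G : Set (Equiv.Perm X)) ∧
      @IsClosed _ (pointwiseTop A) (restrictSet A (G : Set (Equiv.Perm X))) := by
  classical
  have hAB : ∀ x, x ∉ A → x ∈ B := by
    intro x hx
    have : x ∈ A ∪ B := hunion ▸ Set.mem_univ x
    exact this.resolve_left hx
  have hBA : ∀ x ∈ B, x ∉ A := by
    intro x hxB hxA
    exact absurd (hdisj ▸ (Set.mem_inter hxA hxB)) (Set.notMem_empty x)
  have key : ∀ e : Equiv.Perm A,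
      e ∈ @closure _ (pointwiseTop A) (restrictSet A (G : Set (Equiv.Perm X))) →
      e ∈ restrictSet A {g : Equiv.Perm X | g ∈ G ∧ ∀ b ∈ B, g b = b} := by
    intro e he
    let h : Equiv.Perm X := Equiv.Perm.subtypeCongr (p := fun x => x ∈ A) e 1
    have hA : ∀ (x : X) (hx : x ∈ A), h x = e ⟨x, hx⟩ := fun x hx =>
      Equiv.Perm.subtypeCongr.left_apply e 1 hx
    have hB' : ∀ x : X, x ∉ A → h x = x := fun x hx => by
      simpa using Equiv.Perm.subtypeCongr.right_apply e 1 hx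
    have hmemcl : h ∈ @closure _ (pointwiseTop X) (G : Set (Equiv.Perm X)) := by
      rw [mem_closure_pt_iff]
      intro F
      set T : Finset X := F.filter (· ∈ B) with hTdef
      have hT : ↑T ⊆ B := by
        intro x hx
        exact (Finset.mem_filter.mp hx).2
      have he2 : e ∈ @closure _ (pointwiseTop A)
          (restrictSet A {g : Equiv.Perm X | g ∈ G ∧ ∀ t ∈ T, g t = t}) := by
        rw [hyp T hT]; exact he
      rw [mem_closure_pt_iff] at he2
      obtain ⟨f, ⟨g, ⟨hgG, hgT⟩, hfg⟩, hef⟩ := he2 (F.subtype (· ∈ A))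
      refine ⟨g, hgG, ?_⟩
      intro x hxF
      by_cases hx : x ∈ A
      · have hmem : (⟨x, hx⟩ : A) ∈ F.subtype (· ∈ A) := Finset.mem_subtype.mpr hxF
        have h1 := hef _ hmem
        have h2 := hfg ⟨x, hx⟩
        rw [hA x hx, h1]
        exact h2
      · have hxT : x ∈ T := Finset.mem_filter.mpr ⟨hxF, hAB x hx⟩
        rw [hB' x hx, hgT x hxT]
    have hmem : h ∈ G := by
      letI : TopologicalSpace (Equiv.Perm X) := pointwiseTop X
      rwa [hGclosed.closure_eq] at hmemcl
    refine ⟨h, ⟨hmem, fun b hb => hB' b (hBA b hb)⟩, fun a => ?_⟩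
    rw [hA a a.2]
  have sub1 : restrictSet A {g : Equiv.Perm X | g ∈ G ∧ ∀ b ∈ B, g b = b} ⊆
      restrictSet A (G : Set (Equiv.Perm X)) := by
    rintro e ⟨g, hg, hge⟩
    exact ⟨g, hg.1, hge⟩
  have sub2 : restrictSet A (G : Set (Equiv.Perm X)) ⊆
      @closure _ (pointwiseTop A) (restrictSet A (G : Set (Equiv.Perm X))) :=
    by letI := pointwiseTop A; exact subset_closure
  constructor
  · exact Set.Subset.antisymm sub1 (fun e he => key e (sub2 he))
  · have heq : @closure _ (pointwiseTop A) (restrictSet A (G : Set (Equiv.Perm X)))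
        = restrictSet A (G : Set (Equiv.Perm X)) :=
      Set.Subset.antisymm (fun e he => sub1 (key e he)) sub2
    rw [← heq]
    exact @isClosed_closure _ (pointwiseTop A) _
end

section
/- Let H ≤ G be permutation groups with |G : H| = d < ∞, and suppose H is m-sensitive for some m ≥ 2. Then G is dm-sensitive. -/
/-- A permutation group `G ≤ Sym(A)` is `m`-sensitive if whenever two `n`-tuples lie in
different `G`-orbits, some `m`-subtuple (given by an index map `p : Fin m → Fin n`)
already lies in different `G`-orbits. -/
def MSensitive {A : Type*} (G : Subgroup (Equiv.Perm A)) (m : ℕ) : Prop :=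
  ∀ (n : ℕ) (u v : Fin n → A), (¬ ∃ g ∈ G, ∀ i, g (u i) = v i) →
    ∃ p : Fin m → Fin n, ¬ ∃ g ∈ G, ∀ i, g (u (p i)) = v (p i)

/-- if `H ≤ G` are permutation groups with `|G : H| = d` finite, and `H`
is `m`-sensitive for some `m ≥ 2`, then `G` is `dm`-sensitive. -/
theorem stmt_16 {A : Type*} (G H : Subgroup (Equiv.Perm A)) (hHG : H ≤ G)
    (d m : ℕ) (hd : (H.subgroupOf G).index = d) (hdpos : 0 < d) (hm : 2 ≤ m)
    (hH : MSensitive H m) : MSensitive G (d * m) := by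
  intro n u v huv
  set S := H.subgroupOf G with hS
  have hcard : Nat.card (G ⧸ S) = d := hd
  have hfin : Finite (G ⧸ S) := Nat.finite_of_card_ne_zero (by omega)
  let e : (G ⧸ S) ≃ Fin d := Finite.equivFinOfCardEq hcard
  let rep : Fin d → G := fun k => (e.symm k).out
  have key : ∀ k : Fin d,
      ¬ ∃ h ∈ H, ∀ i, h (u i) = ((rep k : Equiv.Perm A))⁻¹ (v i) := by
    rintro k ⟨h, hh, hhv⟩
    apply huv
    refine ⟨(rep k : Equiv.Perm A) * h, mul_mem (rep k).2 (hHG hh), fun i => ?_⟩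
    show (rep k : Equiv.Perm A) (h (u i)) = v i
    rw [hhv i]
    exact (rep k : Equiv.Perm A).apply_symm_apply _
  choose p hp using fun k =>
    hH n u (fun i => ((rep k : Equiv.Perm A))⁻¹ (v i)) (key k)
  refine ⟨fun i => p (finProdFinEquiv.symm i).1 (finProdFinEquiv.symm i).2, ?_⟩
  rintro ⟨g, hgG, hg⟩
  set k := e (QuotientGroup.mk (⟨g, hgG⟩ : G)) with hk
  have hmk : (QuotientGroup.mk (s := S) (rep k) : G ⧸ S)
      = QuotientGroup.mk (s := S) (⟨g, hgG⟩ : G) := by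
    show QuotientGroup.mk (e.symm k).out = _
    rw [QuotientGroup.out_eq', hk, Equiv.symm_apply_apply]
  have hmem : (rep k)⁻¹ * ⟨g, hgG⟩ ∈ S := (QuotientGroup.eq).mp hmk
  rw [hS, Subgroup.mem_subgroupOf] at hmem
  apply hp k
  refine ⟨((rep k : Equiv.Perm A))⁻¹ * g, hmem, fun j => ?_⟩
  show ((rep k : Equiv.Perm A))⁻¹ (g (u (p k j))) = _
  have h2 : g (u (p k j)) = v (p k j) := by simpa using hg (finProdFinEquiv (k, j))
  rw [h2]
end

section
/- Let (G, G*, π) be a cover of permutation groups with finite fiber factors. If G is closed then G* is closed. -/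
open Set

lemma closure_pi_discrete {X : Type*} (T : Set (X → X)) (f : X → X) :
    letI : TopologicalSpace X := ⊥
    (f ∈ closure T ↔ ∀ F : Finset X, ∃ t ∈ T, ∀ x ∈ F, t x = f x) := by
  letI : TopologicalSpace X := ⊥
  haveI : DiscreteTopology X := ⟨rfl⟩
  constructor
  · intro hf F
    have hopen : IsOpen {g : X → X | ∀ x ∈ F, g x = f x} := by
      have : {g : X → X | ∀ x ∈ F, g x = f x} = ⋂ x ∈ F, (fun g : X → X => g x) ⁻¹' {f x} := by
        ext g; simp [Set.mem_iInter]
      rw [this]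
      exact isOpen_biInter_finset fun x _ => (isOpen_discrete _).preimage (continuous_apply x)
    obtain ⟨t, ht1, ht2⟩ := (mem_closure_iff.1 hf) _ hopen (fun x _ => rfl)
    exact ⟨t, ht2, ht1⟩
  · intro hF
    rw [mem_closure_iff]
    intro U hU hfU
    obtain ⟨I, u, hIu, hsub⟩ := isOpen_pi_iff.1 hU f hfU
    obtain ⟨t, htT, ht⟩ := hF I
    refine ⟨t, hsub fun x hx => ?_, htT⟩
    rw [ht x hx]
    exact (hIu x hx).2

lemma mem_closure_pointwiseTop' {X : Type*} (S : Set (Equiv.Perm X)) (h : Equiv.Perm X)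
    (pt : TopologicalSpace (Equiv.Perm X))
    (hpt : pt = (letI : TopologicalSpace X := ⊥;
      TopologicalSpace.induced (fun e : Equiv.Perm X => (e : X → X)) inferInstance)) :
    h ∈ @closure _ pt S ↔ ∀ F : Finset X, ∃ g ∈ S, ∀ x ∈ F, g x = h x := by
  letI : TopologicalSpace X := ⊥
  subst hpt
  letI : TopologicalSpace (Equiv.Perm X) :=
    TopologicalSpace.induced (fun e : Equiv.Perm X => (e : X → X)) inferInstance
  have hind : Topology.IsInducing (fun e : Equiv.Perm X => (e : X → X)) := ⟨rfl⟩
  rw [hind.closure_eq_preimage_closure_image, Set.mem_preimage, closure_pi_discrete]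
  constructor
  · intro hF F
    obtain ⟨t, ⟨g, hgS, rfl⟩, ht⟩ := hF F
    exact ⟨g, hgS, ht⟩
  · intro hF F
    obtain ⟨g, hgS, hg⟩ := hF F
    exact ⟨g, ⟨g, hgS, rfl⟩, hg⟩

/-- restriction of a permutation to a fiber -/
def restPerm {X Xs : Type*} (π : X → Xs) (a : Xs) (σ : Equiv.Perm X)
    (hp : ∀ x, π x = a ↔ π (σ x) = a) : Equiv.Perm (π ⁻¹' {a}) :=
  σ.subtypePerm (fun x => (hp x).symm)

lemma restPerm_coe {X Xs : Type*} (π : X → Xs) (a : Xs) (σ : Equiv.Perm X)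
    (hp : ∀ x, π x = a ↔ π (σ x) = a) (x : (π ⁻¹' {a} : Set X)) :
    (restPerm π a σ hp x : X) = σ (x : X) := rfl

theorem Equiv.Perm.apply_inv_self {α : Type*} (f : Equiv.Perm α) (x : α) : f (f⁻¹ x) = x :=
  f.apply_symm_apply x

/-- The fiber group of a cover at `a`: the restriction to the fiber `π⁻¹(a)` of the
setwise stabilizer of the fiber in `G`. -/
def fiberGroup {X Xs : Type*} (G : Subgroup (Equiv.Perm X)) (π : X → Xs) (a : Xs) :
    Set (Equiv.Perm (π ⁻¹' {a})) :=
  {e | ∃ g ∈ G, (∀ x : X, π x = a → π (g x) = a) ∧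
    ∀ x : (π ⁻¹' {a} : Set X), (e x : X) = g (x : X)}

/-- The pointwise binding group of a cover at `a`: the restriction to the fiber
`π⁻¹(a)` of the pointwise stabilizer in `G` of the complement of the fiber. -/
def pointwiseBindingGroup {X Xs : Type*} (G : Subgroup (Equiv.Perm X)) (π : X → Xs)
    (a : Xs) : Set (Equiv.Perm (π ⁻¹' {a})) :=
  {e | ∃ g ∈ G, (∀ x : X, π x ≠ a → g x = x) ∧
    ∀ x : (π ⁻¹' {a} : Set X), (e x : X) = g (x : X)}

/-- let `(G, G*, π)` be a cover of permutation groups with finite fiber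
factors (each fiber group is covered by finitely many cosets of the corresponding
pointwise binding group). If `G` is closed then `G*` is closed. -/

theorem stmt_17 {X Xs : Type*} (G : Subgroup (Equiv.Perm X)) (Gs : Subgroup (Equiv.Perm Xs))
    (π : X → Xs) (hsurj : Function.Surjective π)
    (hcong : ∀ g ∈ G, ∀ a b : X, π a = π b → π (g a) = π (g b))
    (himg : ∀ h : Equiv.Perm Xs, h ∈ Gs ↔ ∃ g ∈ G, ∀ a : X, h (π a) = π (g a))
    (hfff : ∀ a : Xs, ∃ s : Set (Equiv.Perm (π ⁻¹' {a})), s.Finite ∧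
      ∀ e ∈ fiberGroup G π a, ∃ f ∈ s, f⁻¹ * e ∈ pointwiseBindingGroup G π a)
    (hGclosed : @IsClosed _ (pointwiseTop X) (G : Set (Equiv.Perm X))) :
    @IsClosed _ (pointwiseTop Xs) (Gs : Set (Equiv.Perm Xs)) := by
  classical
  refine @isClosed_of_closure_subset _ (pointwiseTop Xs) _ ?_
  intro h hh
  rw [mem_closure_pointwiseTop' _ _ (pointwiseTop Xs) rfl] at hh
  -- hh : ∀ F : Finset Xs, ∃ k ∈ Gs, ∀ a ∈ F, k a = h a
  choose k hkGs hkagree using hh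
  choose gg hggG hggk using fun F => (himg (k F)).1 (hkGs F)
  -- basic facts
  have hfwd : ∀ (F : Finset Xs) (a : Xs), a ∈ F → ∀ x : X, π x = a → π (gg F x) = h a := by
    intro F a ha x hx
    rw [← hggk F x, hx, hkagree F a ha]
  have hbwd : ∀ (F : Finset Xs) (a : Xs), a ∈ F → ∀ y : X, π y = h a →
      π ((gg F)⁻¹ y) = a := by
    intro F a ha y hy
    have h1 := hggk F ((gg F)⁻¹ y)
    rw [Equiv.Perm.apply_inv_self] at h1
    have h2 : k F (π ((gg F)⁻¹ y)) = k F a := by rw [h1, hy, hkagree F a ha]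
    exact (k F).injective h2
  have hfa : ∀ (a : Xs) (x : X), π x = a → π (gg {a} x) = h a :=
    fun a => hfwd {a} a (Finset.mem_singleton_self a)
  have hba : ∀ (a : Xs) (y : X), π y = h a → π ((gg {a})⁻¹ y) = a :=
    fun a => hbwd {a} a (Finset.mem_singleton_self a)
  have hσiff : ∀ (F : Finset Xs) (a : Xs), a ∈ F →
      ∀ x : X, π x = a ↔ π (((gg {a})⁻¹ * gg F : Equiv.Perm X) x) = a := by
    intro F a ha x
    rw [Equiv.Perm.mul_apply]
    constructor
    · intro hx
      exact hba a _ (hfwd F a ha x hx)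
    · intro hx
      have h1 : π (gg {a} ((gg {a})⁻¹ (gg F x))) = h a := hfa a _ hx
      rw [Equiv.Perm.apply_inv_self] at h1
      have h2 : k F (π x) = k F a := by rw [hggk F x, h1, hkagree F a ha]
      exact (k F).injective h2
  have heFG : ∀ (F : Finset Xs) (a : Xs) (ha : a ∈ F),
      restPerm π a ((gg {a})⁻¹ * gg F) (hσiff F a ha) ∈ fiberGroup G π a := by
    intro F a ha
    refine ⟨(gg {a})⁻¹ * gg F, mul_mem (inv_mem (hggG {a})) (hggG F), ?_, ?_⟩
    · intro x hx
      exact (hσiff F a ha x).1 hx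
    · intro x
      rfl
  choose s hsfin hscov using hfff
  have hsel : ∀ (F : Finset Xs) (a : Xs) (ha : a ∈ F),
      ∃ f ∈ s a, f⁻¹ * restPerm π a ((gg {a})⁻¹ * gg F) (hσiff F a ha)
        ∈ pointwiseBindingGroup G π a :=
    fun F a ha => hscov a _ (heFG F a ha)
  choose φ0 hφ0s hφ0B using hsel
  -- ultrafilter
  obtain ⟨U, hU⟩ := Ultrafilter.exists_le (Filter.atTop : Filter (Finset Xs))
  have hmemU : ∀ F0 : Finset Xs, {F : Finset Xs | F0 ≤ F} ∈ U := fun F0 =>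
    hU (Filter.mem_atTop F0)
  have hcst : ∀ a : Xs, ∃ f ∈ s a,
      {F : Finset Xs | ∃ ha : a ∈ F, φ0 F a ha = f} ∈ U := by
    intro a
    have h1 : {F : Finset Xs | a ∈ F} ∈ U := by
      refine Filter.mem_of_superset (hmemU {a}) ?_
      intro F hF
      exact Finset.singleton_subset_iff.1 hF
    have h2 : {F : Finset Xs | a ∈ F} ⊆
        ⋃ f ∈ s a, {F : Finset Xs | ∃ ha : a ∈ F, φ0 F a ha = f} := by
      intro F hF
      exact Set.mem_biUnion (hφ0s F a hF) ⟨hF, rfl⟩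
    exact (Ultrafilter.finite_biUnion_mem_iff (hsfin a)).1 (Filter.mem_of_superset h1 h2)
  choose fa hfas hfaU using hcst
  -- the lift
  let gfun : X → X := fun x => gg {π x} ((fa (π x)) ⟨x, rfl⟩ : X)
  have gval : ∀ (a : Xs) (x : X) (hx : π x = a), gfun x = gg {a} ((fa a) ⟨x, hx⟩ : X) := by
    intro a x hx
    subst hx
    rfl
  have hπg : ∀ x : X, π (gfun x) = h (π x) := by
    intro x
    exact hfa (π x) _ ((fa (π x)) ⟨x, rfl⟩).2
  have hinj : Function.Injective gfun := by
    intro x y hxy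
    have hπ : π x = π y := h.injective (by rw [← hπg x, ← hπg y, hxy])
    rw [gval (π y) x hπ, gval (π y) y rfl] at hxy
    have h3 := (gg {π y}).injective hxy
    have h4 := (fa (π y)).injective (Subtype.ext h3)
    exact congrArg Subtype.val h4
  have hsurjg : Function.Surjective gfun := by
    intro y
    have hya : π y = h (h.symm (π y)) := (h.apply_symm_apply (π y)).symm
    have hz : π ((gg {h.symm (π y)})⁻¹ y) = h.symm (π y) := hba _ y hya
    refine ⟨(((fa (h.symm (π y)))⁻¹ ⟨(gg {h.symm (π y)})⁻¹ y, hz⟩ : (π ⁻¹' {h.symm (π y)} : Set X)) : X), ?_⟩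
    have hx := ((fa (h.symm (π y)))⁻¹ ⟨(gg {h.symm (π y)})⁻¹ y, hz⟩).2
    rw [gval (h.symm (π y)) _ hx]
    have he : (⟨_, hx⟩ : (π ⁻¹' {h.symm (π y)} : Set X))
        = (fa (h.symm (π y)))⁻¹ ⟨(gg {h.symm (π y)})⁻¹ y, hz⟩ := Subtype.ext rfl
    rw [he, Equiv.Perm.apply_inv_self]
    exact Equiv.Perm.apply_inv_self (gg {h.symm (π y)}) y
  let gP : Equiv.Perm X := Equiv.ofBijective gfun ⟨hinj, hsurjg⟩
  -- gP ∈ G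
  have hgPcl : gP ∈ @closure _ (pointwiseTop X) (G : Set (Equiv.Perm X)) := by
    rw [mem_closure_pointwiseTop' _ _ (pointwiseTop X) rfl]
    intro S
    set F0 := S.image π with hF0
    have hM : ({F : Finset Xs | F0 ≤ F} ∩
        ⋂ a ∈ F0, {F : Finset Xs | ∃ ha : a ∈ F, φ0 F a ha = fa a}) ∈ U :=
      Filter.inter_mem (hmemU F0) ((Filter.biInter_finset_mem F0).2 fun a _ => hfaU a)
    obtain ⟨F, hFmem⟩ := U.nonempty_of_mem hM
    have hF0F : F0 ⊆ F := hFmem.1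
    have hFa : ∀ a ∈ F0, ∃ ha : a ∈ F, φ0 F a ha = fa a := by
      intro a haF0
      exact Set.mem_iInter₂.1 hFmem.2 a haF0
    -- binding elements
    have hbind : ∀ a ∈ F0, ∃ β : Equiv.Perm X, β ∈ G ∧ (∀ x, π x ≠ a → β x = x) ∧
        ∀ x : X, π x = a → gg F x = gfun (β x) := by
      intro a haF0
      obtain ⟨haF, hφeq⟩ := hFa a haF0
      have hB : (fa a)⁻¹ * restPerm π a ((gg {a})⁻¹ * gg F) (hσiff F a haF)
          ∈ pointwiseBindingGroup G π a := by
        rw [← hφeq]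
        exact hφ0B F a haF
      obtain ⟨β, hβG, hβfix, hβeq⟩ := hB
      refine ⟨β, hβG, hβfix, ?_⟩
      intro x hx
      have hq := hβeq ⟨x, hx⟩
      -- hq : ↑(((fa a)⁻¹ * restPerm ...) ⟨x,hx⟩) = β x
      set q := ((fa a)⁻¹ * restPerm π a ((gg {a})⁻¹ * gg F) (hσiff F a haF)) ⟨x, hx⟩ with hqdef
      have hqmem : π (β x) = a := by rw [← hq]; exact q.2
      have he : restPerm π a ((gg {a})⁻¹ * gg F) (hσiff F a haF) ⟨x, hx⟩ = fa a q := by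
        rw [hqdef, Equiv.Perm.mul_apply, Equiv.Perm.apply_inv_self]
      have hcoe : ((restPerm π a ((gg {a})⁻¹ * gg F) (hσiff F a haF) ⟨x, hx⟩ : X))
          = (gg {a})⁻¹ (gg F x) := rfl
      have h5 : (gg {a})⁻¹ (gg F x) = ((fa a q : X)) := by rw [← hcoe, he]
      have h6 : gg F x = gg {a} ((fa a q : X)) := by
        rw [← h5, Equiv.Perm.apply_inv_self]
      rw [gval a (β x) hqmem, h6]
      have h7 : (⟨β x, hqmem⟩ : (π ⁻¹' {a} : Set X)) = q := Subtype.ext hq.symm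
      rw [h7]
    -- upgraded binding elements
    have hbind' : ∀ a ∈ F0, ∃ β : Equiv.Perm X, β ∈ G ∧ (∀ x, π x ≠ a → β⁻¹ x = x) ∧
        ∀ x : X, π x = a → π (β⁻¹ x) = a ∧ gg F (β⁻¹ x) = gfun x := by
      intro a haF0
      obtain ⟨β, hβG, hβfix, hβkey⟩ := hbind a haF0
      have hβfib : ∀ z, π z = a → π (β z) = a := by
        intro z hz
        by_contra hne
        have h1 := hβfix (β z) hne
        have h2 := β.injective h1
        rw [← h2] at hz
        exact hne hz
      have hβ'fib : ∀ x, π x = a → π (β⁻¹ x) = a := by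
        intro x hx
        by_contra hne
        have h1 := hβfix (β⁻¹ x) hne
        rw [Equiv.Perm.apply_inv_self] at h1
        rw [h1] at hx
        exact hne hx
      have hβ'fix : ∀ x, π x ≠ a → β⁻¹ x = x := by
        intro x hx
        by_cases hc : π (β⁻¹ x) = a
        · exfalso
          have := hβfib _ hc
          rw [Equiv.Perm.apply_inv_self] at this
          exact hx this
        · have h1 := hβfix (β⁻¹ x) hc
          rw [Equiv.Perm.apply_inv_self] at h1
          exact h1.symm
      refine ⟨β, hβG, hβ'fix, ?_⟩
      intro x hx
      refine ⟨hβ'fib x hx, ?_⟩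
      have := hβkey (β⁻¹ x) (hβ'fib x hx)
      rw [Equiv.Perm.apply_inv_self] at this
      exact this
    -- induction on subsets of F0
    have hstep : ∀ T : Finset Xs, T ⊆ F0 → ∃ g' ∈ (G : Set (Equiv.Perm X)),
        (∀ x : X, π x ∈ T → g' x = gfun x) ∧ (∀ x : X, π x ∉ T → g' x = gg F x) := by
      intro T
      induction T using Finset.induction_on with
      | empty =>
        intro _
        exact ⟨gg F, hggG F, fun x hx => absurd hx (Finset.notMem_empty _), fun _ _ => rfl⟩
      | @insert a T' haT' ih =>
        intro hsub
        obtain ⟨g1, hg1G, hg1a, hg1b⟩ := ih (fun b hb => hsub (Finset.mem_insert_of_mem hb))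
        obtain ⟨β, hβG, hβ'fix, hβkey⟩ := hbind' a (hsub (Finset.mem_insert_self a T'))
        refine ⟨g1 * β⁻¹, mul_mem hg1G (inv_mem hβG), ?_, ?_⟩
        · intro x hx
          rw [Equiv.Perm.mul_apply]
          rcases Finset.mem_insert.1 hx with hxa | hxT
          · obtain ⟨hfib, hkey⟩ := hβkey x hxa
            have hnotT : π (β⁻¹ x) ∉ T' := by rw [hfib]; exact haT'
            rw [hg1b _ hnotT, hkey]
          · have hne : π x ≠ a := fun hc => haT' (hc ▸ hxT)
            rw [hβ'fix x hne]
            exact hg1a x hxT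
        · intro x hx
          rw [Equiv.Perm.mul_apply]
          have hne : π x ≠ a := fun hc => hx (hc ▸ Finset.mem_insert_self a T')
          have hnT : π x ∉ T' := fun hc => hx (Finset.mem_insert_of_mem hc)
          rw [hβ'fix x hne]
          exact hg1b x hnT
    obtain ⟨g', hg'G, hg'1, _⟩ := hstep F0 le_rfl
    exact ⟨g', hg'G, fun x hxS => hg'1 x (Finset.mem_image_of_mem π hxS)⟩
  have hgPG : gP ∈ G := (@IsClosed.closure_subset _ (pointwiseTop X) _ hGclosed) hgPcl
  exact (himg h).2 ⟨gP, hgPG, fun x => (hπg x).symm⟩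
end
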